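/- Let a, b, c be nonnegative real numbers with a + b + c = 1, and let i, i', i~, i^ : ℕ → ℝ satisfy the Merrifield–Simmons recurrence system. Set P = 5 + 3a + 7b + 5c and Q = 25a − 11b + 7c. Then i(2) = 18·P + 2·Q, and for all n ≥ 3, i(n) = P·i(n−1) + Q·i(n−2). -/
import Mathlib


/-- The expected Merrifield–Simmons index of the random hexagonal cactus satisfies a
second-order linear recurrence. -/
theorem merrifield_simmons_second_order_recurrence (a b c : ℝ)
    (ha : 0 ≤ a) (hb : 0 ≤ b) (hc : 0 ≤ c) (habc : a + b + c = 1)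
(i i' it ih : ℕ → ℝ)
    (hi0 : i 0 = 1) (hi1 : i 1 = 18)
    (hi'0 : i' 0 = 13) (hit0 : it 0 = 13) (hih0 : ih 0 = 13)
    (hi : ∀ n, 2 ≤ n →
      i n = 5 * i (n - 1) + 8 * a * i' (n - 2) + 8 * b * it (n - 2) + 8 * c * ih (n - 2))
    (hi' : ∀ n, 1 ≤ n →
      i' n = 5 * i n + 3 * a * i' (n - 1) + 3 * b * it (n - 1) + 3 * c * ih (n - 1))
    (hit : ∀ n, 1 ≤ n →
      it n = 3 * i n + 7 * a * i' (n - 1) + 7 * b * it (n - 1) + 7 * c * ih (n - 1))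
    (hih : ∀ n, 1 ≤ n →
      ih n = 4 * i n + 5 * a * i' (n - 1) + 5 * b * it (n - 1) + 5 * c * ih (n - 1))
    (P Q : ℝ)
    (hP : P = 5 + 3 * a + 7 * b + 5 * c)
    (hQ : Q = 25 * a - 11 * b + 7 * c) :
    i 2 = 18 * P + 2 * Q ∧ ∀ n, 3 ≤ n → i n = P * i (n - 1) + Q * i (n - 2) := by
  subst hP hQ
  constructor
  · have h := hi 2 (by norm_num)
    norm_num at h
    rw [hi1, hi'0, hit0, hih0] at h
    rw [h]; linarith
  · intro n hn
    obtain ⟨m, rfl⟩ : ∃ m, n = m + 3 := ⟨n - 3, by omega⟩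
    have h1 : i (m + 3) = 5 * i (m + 2) + 8 * a * i' (m + 1) + 8 * b * it (m + 1)
        + 8 * c * ih (m + 1) := by simpa using hi (m + 3) (by omega)
    have h2 : i (m + 2) = 5 * i (m + 1) + 8 * a * i' m + 8 * b * it m + 8 * c * ih m := by
      simpa using hi (m + 2) (by omega)
    have h3 : i' (m + 1) = 5 * i (m + 1) + 3 * a * i' m + 3 * b * it m + 3 * c * ih m := by
      simpa using hi' (m + 1) (by omega)
    have h4 : it (m + 1) = 3 * i (m + 1) + 7 * a * i' m + 7 * b * it m + 7 * c * ih m := by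
      simpa using hit (m + 1) (by omega)
    have h5 : ih (m + 1) = 4 * i (m + 1) + 5 * a * i' m + 5 * b * it m + 5 * c * ih m := by
      simpa using hih (m + 1) (by omega)
    have e1 : m + 3 - 1 = m + 2 := by omega
    have e2 : m + 3 - 2 = m + 1 := by omega
    rw [e1, e2]
    linear_combination h1 + 8*a*h3 + 8*b*h4 + 8*c*h5 - (3*a+7*b+5*c)*h2
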